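/- Let a, v ∈ ℝ with a ≠ 0 and s₀ > 0. The ODE ṡ = (v/a)(√(4a²s² + 1) − 1) with s(0) = s₀ has a global solution on [0,∞), and: if av > 0 then s(t) → +∞ as t → +∞; if av < 0 then s(t) → 0 as t → +∞. -/

import Mathlib

open Filter

noncomputable def PhiF : ℝ → ℝ := fun x =>
  Real.arsinh (Real.exp x) - (Real.sqrt (Real.exp x ^ 2 + 1) + 1) * Real.exp (-x)

lemma sqrt_gt_one (u : ℝ) (hu : 0 < u) : 1 < Real.sqrt (u ^ 2 + 1) := by
  have h0 : (0:ℝ) ≤ u ^ 2 + 1 := by positivity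
  nlinarith [Real.sq_sqrt h0, Real.sqrt_nonneg (u ^ 2 + 1)]

lemma PhiF_hasDerivAt (x : ℝ) :
    HasDerivAt PhiF (Real.exp x / (Real.sqrt (Real.exp x ^ 2 + 1) - 1)) x := by
  have hu : 0 < Real.exp x := Real.exp_pos x
  have h0 : (0:ℝ) ≤ Real.exp x ^ 2 + 1 := by positivity
  have hS2 : Real.sqrt (Real.exp x ^ 2 + 1) ^ 2 = Real.exp x ^ 2 + 1 := Real.sq_sqrt h0
  have hS1 : 1 < Real.sqrt (Real.exp x ^ 2 + 1) := sqrt_gt_one _ hu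
  have h1 : HasDerivAt (fun x => Real.arsinh (Real.exp x))
      ((Real.sqrt (1 + Real.exp x ^ 2))⁻¹ * Real.exp x) x :=
    (Real.hasDerivAt_arsinh (Real.exp x)).comp x (Real.hasDerivAt_exp x)
  have hexp2 : HasDerivAt (fun x => Real.exp x ^ 2 + 1)
      (2 * Real.exp x ^ 1 * Real.exp x) x :=
    ((Real.hasDerivAt_exp x).pow 2).add_const 1
  have hsq : HasDerivAt (fun x => Real.sqrt (Real.exp x ^ 2 + 1) + 1)
      (1 / (2 * Real.sqrt (Real.exp x ^ 2 + 1)) * (2 * Real.exp x ^ 1 * Real.exp x)) x :=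
    (((Real.hasDerivAt_sqrt (by positivity)).comp x hexp2)).add_const 1
  have hexpneg : HasDerivAt (fun x => Real.exp (-x)) (Real.exp (-x) * (-1)) x :=
    (Real.hasDerivAt_exp (-x)).comp x (hasDerivAt_neg x)
  have hΦ := h1.sub (hsq.mul hexpneg)
  convert hΦ using 1
  case e'_4 => rfl
  case e'_5 => rfl
  case e'_8 => rfl
  have h1S : Real.sqrt (1 + Real.exp x ^ 2) = Real.sqrt (Real.exp x ^ 2 + 1) := by
    rw [add_comm]
  rw [h1S, Real.exp_neg]
  have hSpos : 0 < Real.sqrt (Real.exp x ^ 2 + 1) := by linarith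
  have hSne : Real.sqrt (Real.exp x ^ 2 + 1) - 1 ≠ 0 := by
    intro h; nlinarith
  field_simp
  linear_combination (-Real.sqrt (Real.exp x ^ 2 + 1)) * hS2

lemma PhiF_strictMono : StrictMono PhiF := by
  apply strictMono_of_deriv_pos
  intro x
  rw [(PhiF_hasDerivAt x).deriv]
  have hS1 := sqrt_gt_one (Real.exp x) (Real.exp_pos x)
  exact div_pos (Real.exp_pos x) (by linarith)

lemma sinh_le_exp (x : ℝ) : Real.sinh x ≤ Real.exp x := by
  have := Real.sinh_eq x; nlinarith [Real.exp_pos (-x), Real.exp_pos x]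

lemma PhiF_tendsto_atTop : Tendsto PhiF atTop atTop := by
  apply tendsto_atTop_mono' atTop (f₁ := fun x => x - 3)
  · filter_upwards [Filter.eventually_ge_atTop (0:ℝ)] with x hx
    have hu : (1:ℝ) ≤ Real.exp x := Real.one_le_exp hx
    have hupos : (0:ℝ) < Real.exp x := Real.exp_pos x
    have harsinh : x ≤ Real.arsinh (Real.exp x) := by
      have h1 : Real.sinh x ≤ Real.exp x := sinh_le_exp x
      calc x = Real.arsinh (Real.sinh x) := (Real.arsinh_sinh x).symm
        _ ≤ Real.arsinh (Real.exp x) := Real.arsinh_le_arsinh.2 h1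
    have hSle : Real.sqrt (Real.exp x ^ 2 + 1) ≤ Real.exp x + 1 := by
      have : Real.exp x ^ 2 + 1 ≤ (Real.exp x + 1) ^ 2 := by nlinarith
      calc Real.sqrt (Real.exp x ^ 2 + 1) ≤ Real.sqrt ((Real.exp x + 1) ^ 2) :=
            Real.sqrt_le_sqrt this
        _ = Real.exp x + 1 := Real.sqrt_sq (by positivity)
    have hterm : (Real.sqrt (Real.exp x ^ 2 + 1) + 1) * Real.exp (-x) ≤ 3 := by
      rw [Real.exp_neg]
      calc (Real.sqrt (Real.exp x ^ 2 + 1) + 1) * (Real.exp x)⁻¹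
          ≤ (Real.exp x + 2) * (Real.exp x)⁻¹ :=
            mul_le_mul_of_nonneg_right (by linarith) (by positivity)
        _ ≤ 3 := by
            rw [mul_inv_le_iff₀ hupos]; nlinarith
    simp only [PhiF]
    linarith
  · simpa [sub_eq_add_neg] using tendsto_atTop_add_const_right atTop (-3 : ℝ) tendsto_id

lemma PhiF_tendsto_atBot : Tendsto PhiF atBot atBot := by
  apply tendsto_atBot_mono' atBot (f₁ := fun x => 1 - 2 * Real.exp (-x))
  · filter_upwards [Filter.eventually_le_atBot (0:ℝ)] with x hx
    have hupos : (0:ℝ) < Real.exp x := Real.exp_pos x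
    have hu1 : Real.exp x ≤ 1 := Real.exp_le_one_iff.2 hx
    have harsinh : Real.arsinh (Real.exp x) ≤ 1 := by
      have h1 : Real.arsinh (Real.exp x) ≤ Real.sinh (Real.arsinh (Real.exp x)) :=
        Real.self_le_sinh_iff.2 (Real.arsinh_nonneg_iff.2 hupos.le)
      rw [Real.sinh_arsinh] at h1
      linarith
    have hS1 : 1 < Real.sqrt (Real.exp x ^ 2 + 1) := sqrt_gt_one _ hupos
    have hterm : 2 * Real.exp (-x) ≤ (Real.sqrt (Real.exp x ^ 2 + 1) + 1) * Real.exp (-x) := by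
      apply mul_le_mul_of_nonneg_right (by linarith) (Real.exp_pos _).le
    simp only [PhiF]
    linarith
  · have h1 : Tendsto (fun x : ℝ => Real.exp (-x)) atBot atTop :=
      Real.tendsto_exp_atTop.comp tendsto_neg_atBot_atTop
    have h2 : Tendsto (fun x : ℝ => 2 * Real.exp (-x)) atBot atTop :=
      h1.const_mul_atTop two_pos
    have h3 : Tendsto (fun x : ℝ => 1 + -(2 * Real.exp (-x))) atBot atBot :=
      tendsto_atBot_add_const_left atBot 1 (tendsto_neg_atTop_atBot.comp h2)
    simpa [sub_eq_add_neg] using h3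

lemma PhiF_surjective : Function.Surjective PhiF := by
  have hcont : Continuous PhiF :=
    (Differentiable.continuous fun x => (PhiF_hasDerivAt x).differentiableAt)
  exact hcont.surjective PhiF_tendsto_atTop PhiF_tendsto_atBot

/-- For `a ≠ 0` and `s₀ > 0`, the ODE `ṡ = (v/a)(√(4a²s² + 1) − 1)`, `s(0) = s₀`, has a
global positive solution on `[0,∞)`; it tends to `+∞` if `av > 0` and to `0` if `av < 0`,
as `t → +∞`. -/
theorem stmt_14 (a v s₀ : ℝ) (ha : a ≠ 0) (hs₀ : 0 < s₀) :
    ∃ s : ℝ → ℝ, s 0 = s₀ ∧ (∀ t : ℝ, 0 ≤ t → 0 < s t) ∧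
      (∀ t : ℝ, 0 ≤ t →
        HasDerivAt s (v / a * (Real.sqrt (4 * a ^ 2 * (s t) ^ 2 + 1) - 1)) t) ∧
      (0 < a * v → Tendsto s atTop atTop) ∧
      (a * v < 0 → Tendsto s atTop (nhds 0)) := by
  set b : ℝ := 2 * |a| with hbdef
  have hb : 0 < b := by positivity
  set c : ℝ := b * (v / a) with hcdef
  set e : ℝ ≃o ℝ := StrictMono.orderIsoOfSurjective PhiF PhiF_strictMono PhiF_surjective
    with hedef
  have he : ∀ x, e x = PhiF x := fun x => by
    rw [hedef, StrictMono.coe_orderIsoOfSurjective]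
  set Ψ : ℝ → ℝ := fun y => e.symm y with hΨdef
  have hΨcont : Continuous Ψ := e.symm.continuous
  have hinv : ∀ y, PhiF (Ψ y) = y := fun y => by
    rw [← he]; exact e.apply_symm_apply y
  have hinv' : ∀ x, Ψ (PhiF x) = x := fun x => by
    rw [← he]; exact e.symm_apply_apply x
  have hΨderiv : ∀ y, HasDerivAt Ψ
      (Real.exp (Ψ y) / (Real.sqrt (Real.exp (Ψ y) ^ 2 + 1) - 1))⁻¹ y := by
    intro y
    have hS1 := sqrt_gt_one (Real.exp (Ψ y)) (Real.exp_pos _)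
    exact HasDerivAt.of_local_left_inverse hΨcont.continuousAt
      (PhiF_hasDerivAt (Ψ y))
      (ne_of_gt (div_pos (Real.exp_pos _) (by linarith)))
      (Filter.Eventually.of_forall hinv)
  set K : ℝ := PhiF (Real.log (b * s₀)) with hKdef
  have hb2 : b ^ 2 = 4 * a ^ 2 := by rw [hbdef, mul_pow, sq_abs]; ring
  have hcb : c / b = v / a := by rw [hcdef]; field_simp
  refine ⟨fun t => Real.exp (Ψ (c * t + K)) / b, ?_, ?_, ?_, ?_, ?_⟩
  · show Real.exp (Ψ (c * 0 + K)) / b = s₀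
    rw [mul_zero, zero_add, hKdef, hinv', Real.exp_log (by positivity)]
    field_simp
  · intro t _; positivity
  · intro t _
    have h1 : HasDerivAt (fun t : ℝ => c * t + K) c t := by
      simpa using ((hasDerivAt_id t).const_mul c).add_const K
    have h2 : HasDerivAt (fun t : ℝ => Ψ (c * t + K))
        ((Real.exp (Ψ (c * t + K)) /
          (Real.sqrt (Real.exp (Ψ (c * t + K)) ^ 2 + 1) - 1))⁻¹ * c) t := by
      exact (hΨderiv (c * t + K)).comp t h1
    have h3 : HasDerivAt (fun t : ℝ => Real.exp (Ψ (c * t + K)))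
        (Real.exp (Ψ (c * t + K)) *
          ((Real.exp (Ψ (c * t + K)) /
            (Real.sqrt (Real.exp (Ψ (c * t + K)) ^ 2 + 1) - 1))⁻¹ * c)) t := by
      exact (Real.hasDerivAt_exp (Ψ (c * t + K))).comp t h2
    have h4 := h3.div_const b
    convert h4 using 1
    case e'_4 => rfl
    case e'_5 => rfl
    have hupos : 0 < Real.exp (Ψ (c * t + K)) := Real.exp_pos _
    have harg : 4 * a ^ 2 * (Real.exp (Ψ (c * t + K)) / b) ^ 2 + 1
        = Real.exp (Ψ (c * t + K)) ^ 2 + 1 := by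
      rw [div_pow, ← hb2]; field_simp
    have hS1 := sqrt_gt_one (Real.exp (Ψ (c * t + K))) hupos
    rw [harg, inv_div, ← hcb]
    field_simp
  · intro hav
    have hva : 0 < v / a := by
      have : v / a = a * v / a ^ 2 := by field_simp
      rw [this]; positivity
    have hc : 0 < c := mul_pos hb hva
    have h1 : Tendsto (fun t : ℝ => c * t + K) atTop atTop :=
      tendsto_atTop_add_const_right _ K (tendsto_id.const_mul_atTop hc)
    have h2 : Tendsto Ψ atTop atTop :=
      (e.symm.strictMono.monotone).tendsto_atTop_atTop fun y =>
        ⟨PhiF y, (hinv' y).ge⟩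
    exact ((Real.tendsto_exp_atTop.comp (h2.comp h1)).atTop_div_const hb)
  · intro hav
    have hva : v / a < 0 := by
      have h : v / a = a * v / a ^ 2 := by field_simp
      rw [h]
      apply div_neg_of_neg_of_pos hav (by positivity)
    have hc : c < 0 := mul_neg_of_pos_of_neg hb hva
    have h1 : Tendsto (fun t : ℝ => c * t + K) atTop atBot :=
      tendsto_atBot_add_const_right _ K (tendsto_id.const_mul_atTop_of_neg hc)
    have h2 : Tendsto Ψ atBot atBot :=
      (e.symm.strictMono.monotone).tendsto_atBot_atBot fun y =>
        ⟨PhiF y, (hinv' y).le⟩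
    have h3 : Tendsto (fun t : ℝ => Real.exp (Ψ (c * t + K))) atTop (nhds 0) :=
      Real.tendsto_exp_atBot.comp (h2.comp h1)
    simpa using h3.div_const b
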